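/- Let λ ∈ ℝ with λ ≠ 0 and n ∈ ℕ with n ≥ 1. For every x > 0 with x > |λ|, the n-th derivative at x of the function x ↦ (1 + λ/x)^{1/λ} equals (−1)^n · x^{−n} · (1 + λ/x)^{1/λ} · Σ_{l=1}^{n} C(n−1, l−1)·C(n, l)·(1)_{l,λ}·(n−l)! · (1/(x + λ))^{l}. -/

import Mathlib

/-- The degenerate falling factorial `(1)_{m,λ} = ∏_{j=0}^{m-1} (1 - jλ)`. -/
noncomputable def degFall (lam : ℝ) (m : ℕ) : ℝ :=
  ∏ j ∈ Finset.range m, (1 - (j : ℝ) * lam)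

lemma degFall_succ' (lam : ℝ) (m : ℕ) :
    degFall lam (m+1) = degFall lam m * (1 - (m:ℝ) * lam) := by
  simp [degFall, Finset.prod_range_succ]

/-- The coefficient `C(n-1,l-1) C(n,l) (1)_{l,λ} (n-l)!`. -/
noncomputable def cc (lam : ℝ) (n l : ℕ) : ℝ :=
  ((n-1).choose (l-1) : ℝ) * (n.choose l : ℝ) * degFall lam l * ((n-l).factorial : ℝ)

lemma keyR (p m : ℕ) :
    ((p:ℝ)+2) * ((p+1).choose (m+1)) =
      ((p:ℝ)+(m:ℝ)+3) * (p.choose (m+1)) + ((m:ℝ)+2) * (p.choose m) := by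
  rcases le_or_gt m p with h | h
  · have h1 : (p.choose (m+1) : ℝ) * ((m:ℝ)+1) = (p.choose m : ℝ) * ((p:ℝ) - m) := by
      have h0 : ((p.choose (m+1) * (m+1) : ℕ) : ℝ) = ((p.choose m * (p - m) : ℕ) : ℝ) :=
        congrArg _ (Nat.choose_succ_right_eq p m)
      push_cast [Nat.cast_sub h] at h0
      linarith [h0]
    have h2 : ((p+1).choose (m+1) : ℝ) = (p.choose m : ℝ) + (p.choose (m+1) : ℝ) := by
      exact_mod_cast congrArg (Nat.cast (R:=ℝ)) (Nat.choose_succ_succ p m)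
    rw [h2]; linarith [h1]
  · rw [Nat.choose_eq_zero_of_lt (by omega), Nat.choose_eq_zero_of_lt (by omega),
      Nat.choose_eq_zero_of_lt (by omega)]
    simp

lemma cc_rec (lam : ℝ) (p m : ℕ) (hmp : m ≤ p) :
    cc lam (p+2) (m+2) = ((p:ℝ)+(m:ℝ)+3) * cc lam (p+1) (m+2)
      + (1 - ((m:ℝ)+1)*lam) * cc lam (p+1) (m+1) := by
  rcases eq_or_lt_of_le hmp with rfl | h
  · simp [cc, Nat.succ_sub_succ, Nat.choose_eq_zero_of_lt, degFall_succ']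
    push_cast
    ring
  · have key := keyR p m
    have f1 : ((p+2).choose (m+2) : ℝ) * ((m+2).factorial : ℝ) * ((p-m).factorial : ℝ)
        = ((p+2).factorial : ℝ) := by
      have := Nat.choose_mul_factorial_mul_factorial (show m+2 ≤ p+2 by omega)
      have h2 : p+2-(m+2) = p-m := by omega
      rw [h2] at this
      exact_mod_cast congrArg (Nat.cast (R:=ℝ)) this
    have f2 : ((p+1).choose (m+2) : ℝ) * ((m+2).factorial : ℝ) * ((p-m-1).factorial : ℝ)
        = ((p+1).factorial : ℝ) := by
      have := Nat.choose_mul_factorial_mul_factorial (show m+2 ≤ p+1 by omega)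
      have h2 : p+1-(m+2) = p-m-1 := by omega
      rw [h2] at this
      exact_mod_cast congrArg (Nat.cast (R:=ℝ)) this
    have f3 : ((p+1).choose (m+1) : ℝ) * ((m+1).factorial : ℝ) * ((p-m).factorial : ℝ)
        = ((p+1).factorial : ℝ) := by
      have := Nat.choose_mul_factorial_mul_factorial (show m+1 ≤ p+1 by omega)
      have h2 : p+1-(m+1) = p-m := by omega
      rw [h2] at this
      exact_mod_cast congrArg (Nat.cast (R:=ℝ)) this
    have hfm : ((m+2).factorial : ℝ) = ((m:ℝ)+2) * ((m+1).factorial : ℝ) := by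
      rw [Nat.factorial_succ (m+1)]; push_cast; ring
    have hfp : ((p+2).factorial : ℝ) = ((p:ℝ)+2) * ((p+1).factorial : ℝ) := by
      rw [Nat.factorial_succ (p+1)]; push_cast; ring
    have hF2 : ((m+2).factorial : ℝ) ≠ 0 := by positivity
    apply mul_left_cancel₀ hF2
    simp only [cc, Nat.succ_sub_succ, Nat.succ_sub_one, Nat.sub_zero]
    have hsub2 : p-(m+1) = p-m-1 := by omega
    rw [hsub2, degFall_succ' lam (m+1)]
    push_cast
    linear_combination (((p+1).choose (m+1) : ℝ) * degFall lam (m+1) * (1-((m:ℝ)+1)*lam)) * f1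
      + (((p+1).choose (m+1) : ℝ) * degFall lam (m+1) * (1-((m:ℝ)+1)*lam)) * hfp
      + (((p+1).factorial : ℝ) * degFall lam (m+1) * (1-((m:ℝ)+1)*lam)) * key
      - (((p:ℝ)+(m:ℝ)+3) * (p.choose (m+1) : ℝ) * degFall lam (m+1) * (1-((m:ℝ)+1)*lam)) * f2
      - ((p.choose m : ℝ) * ((p+1).choose (m+1) : ℝ) * degFall lam (m+1) * (1-((m:ℝ)+1)*lam)
          * ((p-m).factorial : ℝ)) * hfm
      - (((m:ℝ)+2) * (p.choose m : ℝ) * degFall lam (m+1) * (1-((m:ℝ)+1)*lam)) * f3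

lemma cc_one (lam : ℝ) (q : ℕ) : cc lam (q+1) 1 = ((q+1).factorial : ℝ) := by
  simp [cc, degFall, Nat.factorial_succ]

lemma cc_top (lam : ℝ) (n : ℕ) : cc lam n (n+1) = 0 := by
  simp [cc, Nat.choose_eq_zero_of_lt]

/-- The sum `∑_{l=1}^n c_{n,l} (x+λ)^{-l}`. -/
noncomputable def SS (lam : ℝ) (n : ℕ) (x : ℝ) : ℝ :=
  ∑ k ∈ Finset.range n, cc lam n (k+1) * (x+lam) ^ (-(k+1 : ℤ))

/-- The claimed `n`-th derivative. -/
noncomputable def FF (lam : ℝ) (n : ℕ) (x : ℝ) : ℝ :=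
  (-1:ℝ)^n * x ^ (-(n:ℤ)) * (1+lam/x) ^ (1/lam) * SS lam n x

lemma sum_id (lam x : ℝ) (hu : x + lam ≠ 0) (n : ℕ) (hn : 1 ≤ n) :
    SS lam (n+1) x = (n:ℝ) * SS lam n x + (x+lam)⁻¹ * SS lam n x
      + x * ∑ k ∈ Finset.range n, cc lam n (k+1) * ((k:ℝ)+1) * (x+lam)^(-(k+1:ℤ)-1) := by
  obtain ⟨q, rfl⟩ : ∃ q, n = q + 1 := ⟨n - 1, by omega⟩
  set u := x + lam with hu_def
  have hzpow : ∀ k : ℕ, u ^ (-(k+1:ℤ)-1) = u⁻¹ * u ^ (-(k+1:ℤ)) := by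
    intro k
    rw [sub_eq_add_neg, add_comm, zpow_add₀ hu]
    simp
  have hx_decomp : x = u - lam := by rw [hu_def]; ring
  -- RHS as a single sum
  have hrhs : (((q+1:ℕ)):ℝ) * SS lam (q+1) x + u⁻¹ * SS lam (q+1) x
      + x * ∑ k ∈ Finset.range (q+1), cc lam (q+1) (k+1) * ((k:ℝ)+1) * u^(-(k+1:ℤ)-1)
      = (∑ k ∈ Finset.range (q+1), ((q:ℝ)+1+((k:ℝ)+1)) * cc lam (q+1) (k+1) * u^(-(k+1:ℤ)))
      + ∑ k ∈ Finset.range (q+1), (1-((k:ℝ)+1)*lam) * cc lam (q+1) (k+1) * (u⁻¹ * u^(-(k+1:ℤ))) := by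
    rw [SS, Finset.mul_sum, Finset.mul_sum, Finset.mul_sum, ← Finset.sum_add_distrib,
      ← Finset.sum_add_distrib, ← Finset.sum_add_distrib]
    apply Finset.sum_congr rfl
    intro k _
    rw [hzpow k]
    have hux : x * u⁻¹ = 1 - lam * u⁻¹ := by
      rw [hx_decomp]; field_simp
    push_cast
    linear_combination (((k:ℝ)+1) * (cc lam (q+1) (k+1)) * (u^(-(k+1:ℤ)))) * hux
  rw [hrhs]
  rw [SS, Finset.sum_range_succ']
  simp only [← hu_def]
  have step1 : ∀ k ∈ Finset.range (q+1),
      cc lam (q+1+1) (k+1+1) * u ^ (-(((k+1:ℕ):ℤ)+1)) =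
        ((q:ℝ)+1+(((k+1:ℕ):ℝ)+1)) * cc lam (q+1) (k+1+1) * u ^ (-(((k+1:ℕ):ℤ)+1))
        + (1 - ((k:ℝ)+1)*lam) * cc lam (q+1) (k+1) * (u⁻¹ * u ^ (-((k:ℤ)+1))) := by
    intro k hk
    have hk' : k ≤ q := by simpa [Nat.lt_succ_iff] using Finset.mem_range.mp hk
    have hc := cc_rec lam q k hk'
    have hz : u ^ (-(((k+1:ℕ):ℤ)+1)) = u⁻¹ * u ^ (-((k:ℤ)+1)) := by
      push_cast
      rw [show (-(((k:ℤ)+1)+1)) = (-((k:ℤ)+1))+(-1) by ring, zpow_add₀ hu]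
      simp [mul_comm]
    rw [show q+1+1 = q+2 from rfl, show k+1+1 = k+2 from rfl, hc, hz]
    push_cast
    ring
  rw [Finset.sum_congr rfl step1, Finset.sum_add_distrib]
  have hCs := Finset.sum_range_succ'
    (fun k => ((q:ℝ)+1+((k:ℝ)+1)) * cc lam (q+1) (k+1) * u ^ (-((k:ℤ)+1))) q
  have hAs := Finset.sum_range_succ
    (fun k => ((q:ℝ)+1+(((k+1:ℕ):ℝ)+1)) * cc lam (q+1) (k+1+1) * u ^ (-(((k+1:ℕ):ℤ)+1))) q
  rw [hCs, hAs]
  simp only [cc_top, mul_zero, zero_mul, add_zero]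
  have h1 : cc lam (q+1+1) (0+1) = ((q+2).factorial : ℝ) := cc_one lam (q+1)
  rw [h1]
  have h2 : cc lam (q+1) (0+1) = ((q+1).factorial : ℝ) := cc_one lam q
  rw [h2]
  have h3 : ((q+2).factorial : ℝ) = ((q:ℝ)+2) * ((q+1).factorial : ℝ) := by
    rw [Nat.factorial_succ (q+1)]; push_cast; ring
  rw [h3]
  push_cast
  ring

lemma hasDerivAt_f (lam x : ℝ) (hlam : lam ≠ 0) (hx : 0 < x) (hlx : |lam| < x) :
    HasDerivAt (fun y : ℝ => (1+lam/y)^(1/lam))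
      (-((1+lam/x)^(1/lam) * (x*(x+lam))⁻¹)) x := by
  have hx0 : x ≠ 0 := ne_of_gt hx
  have hxl : 0 < x + lam := by
    have := abs_lt.mp hlx; linarith [this.1]
  have h1 : 0 < 1 + lam/x := by
    have he : 1 + lam/x = (x+lam)/x := by field_simp
    rw [he]; positivity
  have hinner : HasDerivAt (fun y : ℝ => 1 + lam/y) (lam * -(x^2)⁻¹) x := by
    have h0 := ((hasDerivAt_inv hx0).const_mul lam).const_add (1:ℝ)
    simpa [div_eq_mul_inv] using h0
  have hmain := hinner.rpow_const (p := 1/lam) (Or.inl (ne_of_gt h1))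
  convert hmain using 1
  have hpow : (1+lam/x) ^ (1/lam - 1) = (1+lam/x) ^ (1/lam) / (1+lam/x) := by
    rw [Real.rpow_sub h1, Real.rpow_one]
  rw [hpow]
  set A := (1+lam/x) ^ (1/lam) with hA
  have h1x : 1 + lam/x = (x+lam)/x := by field_simp
  rw [h1x]
  have hune : x + lam ≠ 0 := ne_of_gt hxl
  field_simp

lemma hasDerivAt_SS (lam x : ℝ) (hu : x + lam ≠ 0) (n : ℕ) :
    HasDerivAt (SS lam n)
      (-∑ k ∈ Finset.range n, cc lam n (k+1) * ((k:ℝ)+1) * (x+lam)^(-(k+1:ℤ)-1)) x := by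
  have h : HasDerivAt (SS lam n)
      (∑ k ∈ Finset.range n, cc lam n (k+1) * ((-((k:ℤ)+1) : ℤ) * (x+lam)^(-(k+1:ℤ)-1))) x := by
    apply HasDerivAt.fun_sum
    intro k _
    have hbase : HasDerivAt (fun y : ℝ => y + lam) 1 x := (hasDerivAt_id x).add_const lam
    have hz := (hasDerivAt_zpow (-(k+1:ℤ)) (x+lam) (Or.inl hu)).comp x hbase
    simp only [mul_one] at hz
    exact hz.const_mul _
  convert h using 1
  rw [← Finset.sum_neg_distrib]
  apply Finset.sum_congr rfl
  intro k _
  push_cast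
  ring

lemma hasDerivAt_FF (lam x : ℝ) (hlam : lam ≠ 0) (n : ℕ) (hn : 1 ≤ n) (hx : 0 < x) (hlx : |lam| < x) :
    HasDerivAt (FF lam n) (FF lam (n+1) x) x := by
  have hx0 : x ≠ 0 := ne_of_gt hx
  have hxl : 0 < x + lam := by
    have := abs_lt.mp hlx; linarith [this.1]
  have hu : x + lam ≠ 0 := ne_of_gt hxl
  have hzp := hasDerivAt_zpow (-(n:ℤ)) x (Or.inl hx0)
  have hf := hasDerivAt_f lam x hlam hx hlx
  have hS := hasDerivAt_SS lam x hu n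
  have hprod := ((hzp.mul hf).mul hS).const_mul ((-1:ℝ)^n)
  have heq : (-1:ℝ)^n * (((((-(n:ℤ)) : ℤ) : ℝ) * x ^ (-(n:ℤ)-1) * ((1+lam/x)^(1/lam)) +
      x ^ (-(n:ℤ)) * (-((1+lam/x)^(1/lam) * (x*(x+lam))⁻¹))) * SS lam n x +
      x ^ (-(n:ℤ)) * ((1+lam/x)^(1/lam)) *
        (-∑ k ∈ Finset.range n, cc lam n (k+1) * ((k:ℝ)+1) * (x+lam)^(-(k+1:ℤ)-1)))
      = FF lam (n+1) x := by
    rw [FF, sum_id lam x hu n hn]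
    have e1 : x ^ (-((n+1:ℕ):ℤ)) = x ^ (-(n:ℤ)) * x⁻¹ := by
      rw [show (-((n+1:ℕ):ℤ)) = -(n:ℤ) + (-1) by push_cast; ring, zpow_add₀ hx0]
      simp
    have e2 : x ^ (-(n:ℤ)-1) = x ^ (-(n:ℤ)) * x⁻¹ := by
      rw [sub_eq_add_neg, zpow_add₀ hx0]
      simp
    rw [e1, e2, pow_succ]
    field_simp
    push_cast
    ring
  rw [← heq]
  have hFFeq : FF lam n = fun y : ℝ => (-1:ℝ)^n * (y ^ (-(n:ℤ)) * ((1+lam/y)^(1/lam)) * SS lam n y) := by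
    funext y
    simp only [FF]
    ring
  rw [hFFeq]
  exact hprod


/-- Corollary: for `n ≥ 1`,
`dⁿ/dxⁿ e_λ(1/x) = (−1)ⁿ x^{−n} e_λ(1/x) ∑_{l=1}^n C(n−1,l−1) C(n,l) (1)_{l,λ} (n−l)! (1/(x+λ))^l`,
where `e_λ(1/x) = (1 + λ/x)^{1/λ}`. -/
theorem iteratedDeriv_degExp_inv_binom (lam : ℝ) (hlam : lam ≠ 0) (n : ℕ) (hn : 1 ≤ n) :
    ∀ x : ℝ, 0 < x → |lam| < x →
      iteratedDeriv n (fun y : ℝ => (1 + lam / y) ^ (1 / lam)) x =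
        (-1 : ℝ) ^ n * x ^ (-(n : ℝ)) * (1 + lam / x) ^ (1 / lam) *
          ∑ l ∈ Finset.Icc 1 n,
            (Nat.choose (n - 1) (l - 1) : ℝ) * (Nat.choose n l : ℝ) * degFall lam l *
              (Nat.factorial (n - l) : ℝ) * (1 / (x + lam)) ^ l := by
  have claim : ∀ m : ℕ, 1 ≤ m → ∀ x : ℝ, |lam| < x →
      iteratedDeriv m (fun y : ℝ => (1 + lam / y) ^ (1 / lam)) x = FF lam m x := by
    intro m hm
    induction m, hm using Nat.le_induction with
    | base =>
      intro x hlx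
      have hx : 0 < x := lt_of_le_of_lt (abs_nonneg lam) hlx
      have hx0 : x ≠ 0 := ne_of_gt hx
      have hxl : 0 < x + lam := by
        have := abs_lt.mp hlx; linarith [this.1]
      have hu : x + lam ≠ 0 := ne_of_gt hxl
      rw [iteratedDeriv_one, (hasDerivAt_f lam x hlam hx hlx).deriv]
      have h11 : cc lam 1 1 = 1 := by
        have := cc_one lam 0
        simpa using this
      simp only [FF, SS, Finset.sum_range_one, h11, Nat.cast_zero, pow_one]
      norm_num
      ring
    | succ m hm ih =>
      intro x hlx
      have hx : 0 < x := lt_of_le_of_lt (abs_nonneg lam) hlx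
      rw [iteratedDeriv_succ]
      have hev : iteratedDeriv m (fun y : ℝ => (1 + lam / y) ^ (1 / lam)) =ᶠ[nhds x]
          FF lam m := by
        filter_upwards [Ioi_mem_nhds hlx] with y hy
        exact ih y hy
      rw [hev.deriv_eq]
      exact (hasDerivAt_FF lam x hlam m hm hx hlx).deriv
  intro x hx hlx
  rw [claim n hn x hlx, FF]
  have hxp : x ^ (-(n:ℝ)) = x ^ (-(n:ℤ)) := by
    rw [show (-(n:ℝ)) = (((-(n:ℤ)):ℤ) : ℝ) by push_cast; ring, Real.rpow_intCast]
  rw [hxp]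
  have hsum : (∑ l ∈ Finset.Icc 1 n,
      (Nat.choose (n - 1) (l - 1) : ℝ) * (Nat.choose n l : ℝ) * degFall lam l *
        (Nat.factorial (n - l) : ℝ) * (1 / (x + lam)) ^ l) = SS lam n x := by
    rw [← Finset.Ico_add_one_right_eq_Icc, Finset.sum_Ico_eq_sum_range]
    try simp only [Nat.add_sub_cancel]
    rw [SS]
    apply Finset.sum_congr rfl
    intro k hk
    have h1 : (1/(x+lam))^(1+k) = (x+lam)^(-((k:ℤ)+1)) := by
      rw [one_div, inv_pow, ← zpow_natCast (x+lam), ← zpow_neg]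
      congr 1
      push_cast; ring
    rw [h1, show 1+k = k+1 from Nat.add_comm 1 k]
    simp only [cc, Nat.add_sub_cancel]
  rw [hsum]
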